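/- Let k > 0, let x ∈ ℝ³, and let d ∈ ℝ³ with ‖d‖ = 1. Then for every real r > 0 with r ≥ 2‖x‖, the following quantitative far-field estimate for the conjugated Green's function holds: | r·exp(−𝐢kr)·exp(𝐢k‖x − r·d‖)/(4π‖x − r·d‖) − (1/(4π))·exp(−𝐢k⟪x,d⟫) | ≤ (2‖x‖ + k‖x‖²)/(4πr). -/

import Mathlib

open scoped RealInnerProductSpace

noncomputable section

lemma abs_exp_I_sub_one (θ : ℝ) :
    ‖Complex.exp ((θ : ℂ) * Complex.I) - 1‖ ≤ |θ| := by
  have h2 : (‖Complex.exp ((θ : ℂ) * Complex.I) - 1‖) ^ 2 = 2 - 2 * Real.cos θ := by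
    rw [← Complex.normSq_eq_norm_sq, Complex.normSq_apply]
    simp [Complex.exp_ofReal_mul_I_re, Complex.exp_ofReal_mul_I_im]
    nlinarith [Real.sin_sq_add_cos_sq θ]
  have hc := Real.one_sub_sq_div_two_le_cos (x := θ)
  have := norm_nonneg (Complex.exp ((θ : ℂ) * Complex.I) - 1)
  nlinarith [abs_nonneg θ, sq_abs θ]


/-- Quantitative far-field estimate for the conjugated Helmholtz Green's function:
for a unit vector `d`, `r > 0` and `r ≥ 2‖x‖`,
`|r · e^{-𝐢kr} · exp(𝐢k‖x - r d‖)/(4π‖x - r d‖) - (1/(4π)) · exp(-𝐢k⟪x,d⟫)|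
  ≤ (2‖x‖ + k‖x‖²)/(4πr)`. -/
theorem conjG_farfield_estimate
    (k : ℝ) (hk : 0 < k) (x d : EuclideanSpace ℝ (Fin 3)) (hd : ‖d‖ = 1)
    (r : ℝ) (hr : 0 < r) (hrx : 2 * ‖x‖ ≤ r) :
    ‖((r : ℂ) * Complex.exp (-(Complex.I * (k : ℂ) * (r : ℂ))) *
            (Complex.exp (Complex.I * (k : ℂ) * (‖x - r • d‖ : ℂ)) /
              (4 * (Real.pi : ℂ) * (‖x - r • d‖ : ℂ))) -
          (1 / (4 * (Real.pi : ℂ))) * Complex.exp (-(Complex.I * (k : ℂ) * (⟪x, d⟫ : ℂ))))‖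
      ≤ (2 * ‖x‖ + k * ‖x‖ ^ 2) / (4 * Real.pi * r) := by
  set R : ℝ := ‖x - r • d‖ with hR
  set a : ℝ := ⟪x, d⟫ with ha
  have hπ : (0 : ℝ) < Real.pi := Real.pi_pos
  have hxn : (0 : ℝ) ≤ ‖x‖ := norm_nonneg x
  have hrd : ‖r • d‖ = r := by
    rw [norm_smul, hd, Real.norm_eq_abs, abs_of_pos hr]; ring
  have hRr : |R - r| ≤ ‖x‖ := by
    have := abs_norm_sub_norm_le (x - r • d) (-(r • d))
    simpa [hrd] using this
  have hRge : r / 2 ≤ R := by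
    have := abs_le.mp hRr
    linarith [this.1]
  have hRpos : 0 < R := by linarith
  have haabs : |a| ≤ ‖x‖ := by
    have := abs_real_inner_le_norm x d
    simpa [hd, ha] using this
  have hsq : R ^ 2 = ‖x‖ ^ 2 - 2 * (r * a) + r ^ 2 := by
    rw [hR, @norm_sub_sq_real, real_inner_smul_right, hrd, ← ha]
  have haa := abs_le.mp haabs
  have hDge : r ≤ R + (r - a) := by linarith
  have hφD : (R - r + a) * (R + (r - a)) = ‖x‖ ^ 2 - a ^ 2 := by nlinarith
  have hxa : a ^ 2 ≤ ‖x‖ ^ 2 := by nlinarith [sq_abs a]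
  have hφ0 : 0 ≤ R - r + a := by nlinarith
  have hφle : R - r + a ≤ ‖x‖ ^ 2 / r := by
    rw [le_div_iff₀ hr]
    nlinarith
  clear hR ha
  clear_value R a
  have hRc : (R : ℂ) ≠ 0 := by exact_mod_cast hRpos.ne'
  have hπc : (Real.pi : ℂ) ≠ 0 := by exact_mod_cast hπ.ne'
  have key :
      (r : ℂ) * Complex.exp (-(Complex.I * (k : ℂ) * (r : ℂ))) *
            (Complex.exp (Complex.I * (k : ℂ) * (R : ℂ)) /
              (4 * (Real.pi : ℂ) * (R : ℂ))) -
          (1 / (4 * (Real.pi : ℂ))) * Complex.exp (-(Complex.I * (k : ℂ) * (a : ℂ)))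
      = (1 / (4 * (Real.pi : ℂ))) * Complex.exp (Complex.I * k * ((R : ℂ) - r)) *
          ((r / R : ℂ) - Complex.exp (-(Complex.I * k * ((R : ℂ) - r + a)))) := by
    have hBC : Complex.exp (-(Complex.I * (k:ℂ) * (r:ℂ))) *
        Complex.exp (Complex.I * (k:ℂ) * (r:ℂ)) = 1 := by
      rw [← Complex.exp_add]; simp
    rw [show Complex.I * (k : ℂ) * (R : ℂ)
          = Complex.I * k * ((R : ℂ) - r) + Complex.I * k * r by ring,
        Complex.exp_add,
        show -(Complex.I * (k : ℂ) * ((a : ℂ)))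
          = Complex.I * k * ((R : ℂ) - r) + -(Complex.I * k * ((R:ℂ) - r + a)) by ring,
        Complex.exp_add]
    generalize Complex.exp (Complex.I * (k : ℂ) * ((R : ℂ) - (r:ℂ))) = A
    generalize Complex.exp (-(Complex.I * (k : ℂ) * ((R : ℂ) - (r:ℂ) + (a:ℂ)))) = C
    generalize Complex.exp (Complex.I * (k : ℂ) * (r : ℂ)) = B at hBC ⊢
    generalize Complex.exp (-(Complex.I * (k : ℂ) * (r:ℂ))) = D at hBC ⊢
    linear_combination ((r:ℂ) * A / (4 * (Real.pi:ℂ) * R)) * hBC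
  rw [key, norm_mul, norm_mul]
  have habs1 : ‖(1 / (4 * (Real.pi : ℂ)))‖ = 1 / (4 * Real.pi) := by
    rw [norm_div, norm_mul]
    simp [Complex.norm_real, abs_of_pos hπ]
  have habs2 : ‖Complex.exp (Complex.I * k * ((R : ℂ) - r))‖ = 1 := by
    rw [Complex.norm_exp]
    have : (Complex.I * (k : ℂ) * ((R : ℂ) - r)).re = 0 := by simp
    rw [this, Real.exp_zero]
  rw [habs1, habs2, mul_one]
  have hb : ‖(r / R : ℂ) - Complex.exp (-(Complex.I * k * ((R : ℂ) - r + a)))‖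
      ≤ 2 * ‖x‖ / r + k * ‖x‖ ^ 2 / r := by
    have tri : ‖(r / R : ℂ) - Complex.exp (-(Complex.I * k * ((R : ℂ) - r + a)))‖
        ≤ ‖(r / R : ℂ) - 1‖
          + ‖Complex.exp (-(Complex.I * k * ((R : ℂ) - r + a))) - 1‖ := by
      have h := norm_sub_le_norm_sub_add_norm_sub ((r / R : ℂ)) 1
        (Complex.exp (-(Complex.I * k * ((R : ℂ) - r + a))))
      rwa [norm_sub_rev 1] at h
    have h1 : ‖(r / R : ℂ) - 1‖ ≤ 2 * ‖x‖ / r := by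
      rw [show ((r : ℂ) / R - 1) = ((r / R - 1 : ℝ) : ℂ) by push_cast; ring,
          Complex.norm_real, Real.norm_eq_abs,
          show r / R - 1 = (r - R) / R by field_simp,
          abs_div, abs_of_pos hRpos, div_le_div_iff₀ hRpos hr]
      have h3 : |r - R| ≤ ‖x‖ := by rw [abs_sub_comm]; exact hRr
      have hA1 : |r - R| * r ≤ ‖x‖ * r := mul_le_mul_of_nonneg_right h3 hr.le
      have hA2 : ‖x‖ * r ≤ 2 * ‖x‖ * R := by nlinarith
      linarith
    have h2 : ‖Complex.exp (-(Complex.I * k * ((R : ℂ) - r + a))) - 1‖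
        ≤ k * ‖x‖ ^ 2 / r := by
      rw [show -(Complex.I * (k : ℂ) * ((R : ℂ) - r + a))
            = ((-(k * (R - r + a)) : ℝ) : ℂ) * Complex.I by push_cast; ring]
      calc ‖Complex.exp (((-(k * (R - r + a)) : ℝ) : ℂ) * Complex.I) - 1‖
          ≤ |(-(k * (R - r + a)))| := abs_exp_I_sub_one _
        _ = k * (R - r + a) := by
            rw [abs_neg, abs_of_nonneg (mul_nonneg hk.le hφ0)]
        _ ≤ k * ‖x‖ ^ 2 / r := by
            rw [mul_div_assoc]
            exact mul_le_mul_of_nonneg_left hφle hk.le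
    linarith
  calc 1 / (4 * Real.pi) *
        ‖(r / R : ℂ) - Complex.exp (-(Complex.I * k * ((R : ℂ) - r + a)))‖
      ≤ 1 / (4 * Real.pi) * (2 * ‖x‖ / r + k * ‖x‖ ^ 2 / r) := by
        apply mul_le_mul_of_nonneg_left hb
        positivity
    _ = (2 * ‖x‖ + k * ‖x‖ ^ 2) / (4 * Real.pi * r) := by field_simp
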